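/- Fix b ≥ 0 and N = 2b+1. Suppose C : {S ⊆ Fin N : |S| = b} → V is a function to a rational vector space such that for every (b+1)-element subset T of {1,…,N}, ∑_{S ⊂ T, |S|=b} C(S) = 0. Then C(S) = 0 for all S. -/

import Mathlib

open Finset

/-- If for every `(b+1)`-subset `T` of a `(2b+1)`-set the sum of `C(S)` over the
`b`-subsets `S ⊂ T` vanishes, then all `C(S)` vanish. -/
theorem stmt5 (b : ℕ) (V : Type*) [AddCommGroup V] [Module ℚ V]
    (C : Finset (Fin (2*b+1)) → V)
    (h : ∀ T : Finset (Fin (2*b+1)), T.card = b + 1 →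
      ∑ S ∈ Finset.powersetCard b T, C S = 0) :
    ∀ S : Finset (Fin (2*b+1)), S.card = b → C S = 0 := by
  classical
  intro A hA
  set w : ℕ → ℚ := fun i => (-1)^i / (b.choose i) with hw
  -- weighted sum of relations vanishes
  have h0 : (0:V) = ∑ T ∈ powersetCard (b+1) (univ : Finset (Fin (2*b+1))),
      ∑ S ∈ powersetCard b T, w ((T ∩ A).card) • C S := by
    rw [eq_comm]
    apply Finset.sum_eq_zero
    intro T hT
    rw [← Finset.smul_sum, h T (mem_powersetCard.mp hT).2, smul_zero]
  -- reindex the double sum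
  have h1 : ∑ S ∈ powersetCard b (univ : Finset (Fin (2*b+1))),
          ∑ x ∈ Sᶜ, w (((insert x S) ∩ A).card) • C S
      = ∑ T ∈ powersetCard (b+1) (univ : Finset (Fin (2*b+1))),
      ∑ S ∈ powersetCard b T, w ((T ∩ A).card) • C S := by
    rw [Finset.sum_sigma', Finset.sum_sigma']
    refine Finset.sum_bij' (fun p _ => (⟨insert p.2 p.1, p.1⟩ : Σ _ : Finset (Fin (2*b+1)), Finset (Fin (2*b+1))))
      (fun p hp => ⟨p.2, (p.1 \ p.2).min' (by
        simp only [Finset.mem_sigma, Finset.mem_powersetCard] at hp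
        obtain ⟨⟨_, hT⟩, hS, hSb⟩ := hp
        rw [← Finset.card_pos, Finset.card_sdiff_of_subset hS, hT, hSb]; omega)⟩)
      ?_ ?_ ?_ ?_ ?_
    · rintro ⟨S, x⟩ hp
      simp only [Finset.mem_sigma, Finset.mem_powersetCard, Finset.mem_compl] at hp ⊢
      obtain ⟨⟨_, hSb⟩, hx⟩ := hp
      exact ⟨⟨Finset.subset_univ _, by rw [Finset.card_insert_of_notMem hx, hSb]⟩,
        Finset.subset_insert _ _, hSb⟩
    · rintro ⟨T, S⟩ hp
      simp only [Finset.mem_sigma, Finset.mem_powersetCard, Finset.mem_compl] at hp ⊢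
      obtain ⟨⟨_, hT⟩, hS, hSb⟩ := hp
      refine ⟨⟨Finset.subset_univ _, hSb⟩, ?_⟩
      have := Finset.min'_mem (T \ S) (by
        rw [← Finset.card_pos, Finset.card_sdiff_of_subset hS, hT, hSb]; omega)
      exact (Finset.mem_sdiff.mp this).2
    · rintro ⟨S, x⟩ hp
      simp only [Finset.mem_sigma, Finset.mem_powersetCard, Finset.mem_compl] at hp
      obtain ⟨⟨_, hSb⟩, hx⟩ := hp
      have hss : insert x S \ S = {x} := by
        ext y; by_cases hy : y ∈ S <;> simp [hy, Finset.mem_sdiff]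
        rintro rfl; exact hx hy
      simp only [hss, Finset.min'_singleton]
    · rintro ⟨T, S⟩ hp
      simp only [Finset.mem_sigma, Finset.mem_powersetCard] at hp
      obtain ⟨⟨_, hT⟩, hS, hSb⟩ := hp
      have hcard : (T \ S).card = 1 := by
        rw [Finset.card_sdiff_of_subset hS, hT, hSb]; omega
      have hne : (T \ S).Nonempty := by rw [← Finset.card_pos, hcard]; omega
      have hmem := Finset.min'_mem (T \ S) hne
      have hsing : T \ S = {(T \ S).min' hne} :=
        Finset.eq_singleton_iff_unique_mem.mpr ⟨hmem, fun y hy =>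
          Finset.card_le_one.mp hcard.le y hy _ hmem⟩
      have : insert ((T \ S).min' hne) S = T := by
        rw [Finset.insert_eq, ← hsing, Finset.sdiff_union_of_subset hS]
      simp only [this]
    · rintro ⟨S, x⟩ hp
      rfl
  -- pull the scalars out
  have h2 : ∑ S ∈ powersetCard b (univ : Finset (Fin (2*b+1))),
          ∑ x ∈ Sᶜ, w (((insert x S) ∩ A).card) • C S
      = ∑ S ∈ powersetCard b (univ : Finset (Fin (2*b+1))),
          (∑ x ∈ Sᶜ, w (((insert x S) ∩ A).card)) • C S := by
    simp_rw [Finset.sum_smul]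
  -- compute the coefficient of each S
  have hcoeff : ∀ S ∈ powersetCard b (univ : Finset (Fin (2*b+1))),
      ∑ x ∈ Sᶜ, w (((insert x S) ∩ A).card)
        = ((b - (S ∩ A).card : ℕ) : ℚ) * w ((S ∩ A).card + 1)
          + (((S ∩ A).card + 1 : ℕ) : ℚ) * w ((S ∩ A).card) := by
    intro S hS
    rw [mem_powersetCard] at hS
    obtain ⟨-, hSb⟩ := hS
    set i := (S ∩ A).card with hi
    have hsplit : (Sᶜ : Finset (Fin (2*b+1))) = (Sᶜ ∩ A) ∪ (Sᶜ \ A) := by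
      ext y; by_cases hy : y ∈ A <;> simp [hy]
    have hdisj : Disjoint (Sᶜ ∩ A) (Sᶜ \ A) := Finset.disjoint_left.mpr
      (fun a ha hb => (Finset.mem_sdiff.mp hb).2 (Finset.mem_inter.mp ha).2)
    rw [hsplit, Finset.sum_union hdisj]
    have e1 : ∀ x ∈ Sᶜ ∩ A, w (((insert x S) ∩ A).card) = w (i + 1) := by
      intro x hx
      rw [Finset.mem_inter, Finset.mem_compl] at hx
      rw [Finset.insert_inter_of_mem hx.2, Finset.card_insert_of_notMem
        (fun hmem => hx.1 (Finset.mem_inter.mp hmem).1)]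
    have e2 : ∀ x ∈ Sᶜ \ A, w (((insert x S) ∩ A).card) = w i := by
      intro x hx
      rw [Finset.mem_sdiff, Finset.mem_compl] at hx
      rw [Finset.insert_inter_of_notMem hx.2]
    rw [Finset.sum_congr rfl e1, Finset.sum_congr rfl e2,
      Finset.sum_const, Finset.sum_const]
    have hc1 : (Sᶜ ∩ A).card = b - i := by
      have : Sᶜ ∩ A = A \ S := by
        ext y; simp [Finset.mem_sdiff, Finset.mem_inter, and_comm]
      rw [this]
      have h5 := Finset.card_sdiff_add_card_inter A S
      have hAS : (A ∩ S).card = i := by rw [hi, Finset.inter_comm]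
      omega
    have hile : i ≤ b := by
      have h6 := Finset.card_le_card (Finset.inter_subset_right : S ∩ A ⊆ A)
      omega
    have hc2 : (Sᶜ \ A).card = i + 1 := by
      have hcompl : (Sᶜ : Finset (Fin (2*b+1))).card = b + 1 := by
        rw [Finset.card_compl, hSb, Fintype.card_fin]; omega
      have := Finset.card_sdiff_add_card_inter (Sᶜ : Finset (Fin (2*b+1))) A
      have h3 : (Sᶜ ∩ A).card = b - i := hc1
      omega
    rw [hc1, hc2]
    push_cast
    ring
  -- coefficient vanishes unless S = A
  have hzero : ∀ S ∈ powersetCard b (univ : Finset (Fin (2*b+1))), S ≠ A →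
      ∑ x ∈ Sᶜ, w (((insert x S) ∩ A).card) = 0 := by
    intro S hS hne
    rw [hcoeff S hS]
    set i := (S ∩ A).card with hi
    have hSb : S.card = b := (mem_powersetCard.mp hS).2
    have hilt : i < b := by
      have hile : i ≤ b := by
        have h6 := Finset.card_le_card (Finset.inter_subset_right : S ∩ A ⊆ A)
        omega
      rcases lt_or_eq_of_le hile with h' | h'
      · exact h'
      · exfalso
        have : S ∩ A = A := Finset.eq_of_subset_of_card_le Finset.inter_subset_right
          (by omega)
        have hAS : A ⊆ S := by rw [← this]; exact Finset.inter_subset_left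
        exact hne (Finset.eq_of_subset_of_card_le hAS (by rw [hA, hSb])).symm
    have hc1 : (b.choose i : ℚ) ≠ 0 := Nat.cast_ne_zero.mpr (Nat.choose_pos hilt.le).ne'
    have hc2 : (b.choose (i+1) : ℚ) ≠ 0 := Nat.cast_ne_zero.mpr (Nat.choose_pos hilt).ne'
    have hkey : (b.choose (i+1) : ℚ) * (i+1) = (b.choose i) * ((b:ℚ) - i) := by
      have := Nat.choose_succ_right_eq b i
      have h4 : ((b.choose (i+1) * (i+1) : ℕ) : ℚ) = ((b.choose i * (b - i) : ℕ) : ℚ) := by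
        exact_mod_cast congrArg (Nat.cast : ℕ → ℚ) this
      push_cast [Nat.cast_sub hilt.le] at h4
      linear_combination h4
    have hbi : ((b - i : ℕ) : ℚ) = (b : ℚ) - i := by
      push_cast [Nat.cast_sub hilt.le]; ring
    rw [hbi, hw]
    simp only
    rw [pow_succ]
    field_simp
    push_cast
    linear_combination ((-1:ℚ)^i) * hkey
  -- conclude
  have hmemA : A ∈ powersetCard b (univ : Finset (Fin (2*b+1))) :=
    mem_powersetCard.mpr ⟨Finset.subset_univ _, hA⟩
  have h3 : (0:V) = (∑ x ∈ Aᶜ, w (((insert x A) ∩ A).card)) • C A := by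
    rw [h0, ← h1, h2, Finset.sum_eq_single_of_mem A hmemA]
    intro S hS hne
    rw [hzero S hS hne, zero_smul]
  have hAA : (∑ x ∈ Aᶜ, w (((insert x A) ∩ A).card)) = ((b:ℚ)+1) * (-1)^b := by
    rw [hcoeff A hmemA]
    have : (A ∩ A).card = b := by rw [Finset.inter_self, hA]
    rw [this]
    simp only [hw, Nat.sub_self, Nat.cast_zero, zero_mul, zero_add,
      Nat.choose_self, Nat.cast_one, div_one]
    push_cast
    ring
  rw [hAA] at h3
  have hne : ((b:ℚ)+1) * (-1)^b ≠ 0 := by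
    apply mul_ne_zero
    · positivity
    · exact pow_ne_zero _ (by norm_num)
  rcases smul_eq_zero.mp h3.symm with h' | h'
  · exact absurd h' hne
  · exact h'
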